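/- Let l be (M,m)-(restricted smooth, restricted strongly concave) on the sparse subdomain Ω_{2k}, with 0 < m ≤ M. Then for every pair of subsets S, T ⊆ [n] each of size at most k (with the relevant maximizers β^(S), β^(S∪{j}) and β^(S∪T) assumed to exist), it holds that (M/m) · f_S(T) ≥ Σ_{j∈T} f_S(j) ≥ (m/M) · f_S(T). -/

import Mathlib

open scoped BigOperators

noncomputable section

abbrev Euc (n : ℕ) := EuclideanSpace ℝ (Fin n)

/-- Number of nonzero coordinates (the ℓ₀ "norm"). -/
def norm0 {n : ℕ} (x : Euc n) : ℕ := (Finset.univ.filter fun i => x i ≠ 0).card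

/-- `l` is (M,m)-(restricted smooth, restricted strongly concave) on the sparse
subdomain `Ω_r`, with gradient `g`. -/
def IsRSCSM {n : ℕ} (l : Euc n → ℝ) (g : Euc n → Euc n) (M m : ℝ) (r : ℕ) : Prop :=
  ∀ x y : Euc n, norm0 x ≤ r → norm0 y ≤ r → norm0 (x - y) ≤ r →
    (l y - l x - (inner ℝ (g x) (y - x) : ℝ) ≤ -(m / 2) * ‖y - x‖ ^ 2) ∧
    (-(M / 2) * ‖y - x‖ ^ 2 ≤ l y - l x - (inner ℝ (g x) (y - x) : ℝ))

/-- `x` is supported in the index set `S`. -/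
def SuppIn {n : ℕ} (S : Finset (Fin n)) (x : Euc n) : Prop := ∀ i, i ∉ S → x i = 0

/-- The support selection function `f(S) = l(β^(S)) - l(0)`. -/
def fsel {n : ℕ} (l : Euc n → ℝ) (B : Finset (Fin n) → Euc n) (S : Finset (Fin n)) : ℝ :=
  l (B S) - l 0

lemma euc_inner_eq {n : ℕ} (x y : Euc n) : (inner ℝ x y : ℝ) = ∑ i, x i * y i := by
  simp [PiLp.inner_apply, RCLike.inner_apply, mul_comm]

lemma euc_norm_sq {n : ℕ} (x : Euc n) : ‖x‖ ^ 2 = ∑ i, (x i) ^ 2 := by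
  rw [← real_inner_self_eq_norm_sq, euc_inner_eq]
  simp [sq]

lemma norm0_le {n : ℕ} {S : Finset (Fin n)} {x : Euc n} (h : SuppIn S x) :
    norm0 x ≤ S.card := by
  apply Finset.card_le_card
  intro i hi
  simp only [Finset.mem_filter] at hi
  by_contra hiS
  exact hi.2 (h i hiS)

lemma norm0_sub_comm {n : ℕ} (x y : Euc n) : norm0 (x - y) = norm0 (y - x) := by
  unfold norm0
  congr 1
  ext i
  simp only [Finset.mem_filter, Finset.mem_univ, true_and]
  show ¬(x i - y i = 0) ↔ ¬(y i - x i = 0)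
  rw [sub_eq_zero, sub_eq_zero]
  exact not_congr eq_comm

lemma inner_smul_single {n : ℕ} (x : Euc n) (j : Fin n) (c : ℝ) :
    (inner ℝ x (c • EuclideanSpace.single j (1:ℝ)) : ℝ) = c * x j := by
  rw [real_inner_smul_right, EuclideanSpace.inner_single_right]
  simp [mul_comm]

lemma norm_sq_smul_single {n : ℕ} (j : Fin n) (c : ℝ) :
    ‖c • EuclideanSpace.single j (1:ℝ)‖ ^ 2 = c ^ 2 := by
  rw [norm_smul]; simp [EuclideanSpace.norm_single, mul_pow, sq_abs]

lemma suppIn_smul_single {n : ℕ} (j : Fin n) (c : ℝ) :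
    SuppIn {j} (c • EuclideanSpace.single j (1:ℝ)) := by
  intro i hi
  simp only [Finset.mem_singleton] at hi
  show c * (EuclideanSpace.single j (1:ℝ)) i = 0
  rw [EuclideanSpace.single_apply, if_neg hi, mul_zero]

lemma suppIn_sub {n : ℕ} {S : Finset (Fin n)} {x y : Euc n}
    (hx : SuppIn S x) (hy : SuppIn S y) : SuppIn S (x - y) := by
  intro i hi
  show x i - y i = 0
  rw [hx i hi, hy i hi, sub_zero]

set_option maxHeartbeats 1000000 in
theorem stmt2 {n k : ℕ} (l : Euc n → ℝ) (g : Euc n → Euc n) (M m : ℝ)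
    (hm : 0 < m) (hmM : m ≤ M)
    (hgrad : ∀ x, HasGradientAt l (g x) x)
    (hl : IsRSCSM l g M m (2 * k))
    (B : Finset (Fin n) → Euc n)
    (hB0 : B ∅ = 0)
    (hBsupp : ∀ S, SuppIn S (B S))
    (hBmax : ∀ S x, SuppIn S x → l x ≤ l (B S))
    (S T : Finset (Fin n)) (hS : S.card ≤ k) (hT : T.card ≤ k) :
    (M / m) * (fsel l B (S ∪ T) - fsel l B S)
        ≥ ∑ j ∈ T, (fsel l B (insert j S) - fsel l B S) ∧
    ∑ j ∈ T, (fsel l B (insert j S) - fsel l B S)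
        ≥ (m / M) * (fsel l B (S ∪ T) - fsel l B S) := by
  by_cases hTe : T = ∅
  · subst hTe
    simp [Finset.union_empty]
  have hM : 0 < M := lt_of_lt_of_le hm hmM
  have hk : 1 ≤ k := by
    have : 1 ≤ T.card := Finset.card_pos.mpr (Finset.nonempty_iff_ne_empty.mpr hTe)
    omega
  have h0BS : norm0 (B S) ≤ 2 * k := (norm0_le (hBsupp S)).trans (by omega)
  -- the gradient vanishes on S at the maximizer B S
  have hzero : ∀ j ∈ S, g (B S) j = 0 := by
    intro j hj
    set c := g (B S) j / M with hc
    have hMc : M * c = g (B S) j := by rw [hc]; field_simp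
    set y := B S + c • EuclideanSpace.single j (1:ℝ) with hy
    have hsy : SuppIn S y := by
      intro i hi
      have h1 : B S i = 0 := hBsupp S i hi
      have h2 : c * (EuclideanSpace.single j (1:ℝ)) i = 0 := by
        rw [EuclideanSpace.single_apply, if_neg (fun h : i = j => hi (h ▸ hj)), mul_zero]
      show B S i + c * (EuclideanSpace.single j (1:ℝ)) i = 0
      rw [h1, h2, add_zero]
    have hd : y - B S = c • EuclideanSpace.single j (1:ℝ) := add_sub_cancel_left _ _
    have h0y : norm0 y ≤ 2 * k := (norm0_le hsy).trans (by omega)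
    have h0d : norm0 (y - B S) ≤ 2 * k := by
      rw [hd]
      exact (norm0_le (suppIn_smul_single j c)).trans (by simp; omega)
    have h0d2 : norm0 (B S - y) ≤ 2 * k := by rw [norm0_sub_comm]; exact h0d
    have h2 := (hl (B S) y h0BS h0y h0d2).2
    rw [hd, inner_smul_single, norm_sq_smul_single] at h2
    have hmax := hBmax S y hsy
    have hcg : c * g (B S) j = M * c ^ 2 := by rw [← hMc]; ring
    have hsq : g (B S) j ^ 2 ≤ 0 := by nlinarith [h2, hmax, hM, hMc, hcg, sq_nonneg c]
    exact sq_eq_zero_iff.mp (le_antisymm hsq (sq_nonneg _))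
  -- per-coordinate bounds
  have hBj : ∀ j ∈ T,
      (g (B S) j) ^ 2 ≤ 2 * M * (l (B (insert j S)) - l (B S)) ∧
      2 * m * (l (B (insert j S)) - l (B S)) ≤ (g (B S) j) ^ 2 := by
    intro j _
    have hcard : (insert j S).card ≤ 2 * k := (Finset.card_insert_le j S).trans (by omega)
    constructor
    · -- lower bound via smoothness at B S + (g_j/M) e_j
      set c := g (B S) j / M with hc
      have hMc : M * c = g (B S) j := by rw [hc]; field_simp
      set y := B S + c • EuclideanSpace.single j (1:ℝ) with hy
      have hsy : SuppIn (insert j S) y := by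
        intro i hi
        have hiS : i ∉ S := fun h => hi (Finset.mem_insert_of_mem h)
        have hij : i ≠ j := fun h => hi (h ▸ Finset.mem_insert_self j S)
        show B S i + c * (EuclideanSpace.single j (1:ℝ)) i = 0
        rw [hBsupp S i hiS, EuclideanSpace.single_apply, if_neg hij, mul_zero, add_zero]
      have hd : y - B S = c • EuclideanSpace.single j (1:ℝ) := add_sub_cancel_left _ _
      have h0y : norm0 y ≤ 2 * k := (norm0_le hsy).trans hcard
      have h0d : norm0 (B S - y) ≤ 2 * k := by
        rw [norm0_sub_comm, hd]
        exact (norm0_le (suppIn_smul_single j c)).trans (by simp; omega)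
      have h2 := (hl (B S) y h0BS h0y h0d).2
      rw [hd, inner_smul_single, norm_sq_smul_single] at h2
      have hmax := hBmax (insert j S) y hsy
      have hcg : c * g (B S) j = M * c ^ 2 := by rw [← hMc]; ring
      nlinarith [h2, hmax, hM, hMc, hcg, sq_nonneg c]
    · -- upper bound via strong concavity at B S toward B (insert j S)
      set x := B (insert j S) with hx
      have hsd : SuppIn (insert j S) (x - B S) :=
        suppIn_sub (hBsupp _) (fun i hi => hBsupp S i (fun h => hi (Finset.mem_insert_of_mem h)))
      have h0x : norm0 x ≤ 2 * k := (norm0_le (hBsupp _)).trans hcard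
      have h0d : norm0 (B S - x) ≤ 2 * k := by
        rw [norm0_sub_comm]; exact (norm0_le hsd).trans hcard
      have h1 := (hl (B S) x h0BS h0x h0d).1
      have hsum : (inner ℝ (g (B S)) (x - B S) : ℝ) = g (B S) j * (x - B S) j := by
        rw [euc_inner_eq]
        apply Finset.sum_eq_single_of_mem j (Finset.mem_univ j)
        intro i _ hij
        by_cases hiS : i ∈ S
        · rw [hzero i hiS, zero_mul]
        · rw [hsd i (by simp [Finset.mem_insert, hij, hiS]), mul_zero]
      have hn : ((x - B S) j) ^ 2 ≤ ‖x - B S‖ ^ 2 := by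
        rw [euc_norm_sq]
        exact Finset.single_le_sum (f := fun i => ((x - B S) i) ^ 2) (fun i _ => sq_nonneg _) (Finset.mem_univ j)
      rw [hsum] at h1
      have hmn := mul_le_mul_of_nonneg_left hn (by positivity : (0:ℝ) ≤ m / 2)
      have h1' : l x - l (B S) ≤ g (B S) j * (x - B S) j - (m / 2) * ((x - B S) j) ^ 2 := by
        linarith
      nlinarith [h1', hm, sq_nonneg (g (B S) j - m * ((x - B S) j))]
  -- bounds for the union
  have hcardU : (S ∪ T).card ≤ 2 * k := (Finset.card_union_le S T).trans (by omega)
  have hClo : (∑ j ∈ T, (g (B S) j) ^ 2) ≤ 2 * M * (l (B (S ∪ T)) - l (B S)) := by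
    set v : Euc n :=
      (WithLp.equiv 2 (Fin n → ℝ)).symm (fun i => if i ∈ T then g (B S) i / M else 0) with hv
    have hva : ∀ i, v i = if i ∈ T then g (B S) i / M else 0 := fun i => rfl
    have hsv : SuppIn T v := fun i hi => by rw [hva, if_neg hi]
    set y := B S + v with hy
    have hsy : SuppIn (S ∪ T) y := by
      intro i hi
      rw [Finset.mem_union] at hi
      push_neg at hi
      show B S i + v i = 0
      rw [hBsupp S i hi.1, hsv i hi.2, add_zero]
    have hd : y - B S = v := add_sub_cancel_left _ _
    have h0y : norm0 y ≤ 2 * k := (norm0_le hsy).trans hcardU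
    have h0d : norm0 (B S - y) ≤ 2 * k := by
      rw [norm0_sub_comm, hd]
      exact (norm0_le hsv).trans (by omega)
    have h2 := (hl (B S) y h0BS h0y h0d).2
    rw [hd] at h2
    have hinner : (inner ℝ (g (B S)) v : ℝ) = ∑ i ∈ T, g (B S) i * (g (B S) i / M) := by
      rw [euc_inner_eq]
      have h1 : ∀ i : Fin n,
          g (B S) i * v i = if i ∈ T then g (B S) i * (g (B S) i / M) else 0 := by
        intro i; rw [hva]; split <;> simp
      simp_rw [h1]
      rw [Finset.sum_ite_mem, Finset.univ_inter]
    have hnorm : ‖v‖ ^ 2 = ∑ i ∈ T, (g (B S) i / M) ^ 2 := by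
      rw [euc_norm_sq]
      have h1 : ∀ i : Fin n, (v i) ^ 2 = if i ∈ T then (g (B S) i / M) ^ 2 else 0 := by
        intro i; rw [hva]; split <;> simp
      simp_rw [h1]
      rw [Finset.sum_ite_mem, Finset.univ_inter]
    rw [hinner, hnorm] at h2
    have hmax : l y ≤ l (B (S ∪ T)) := hBmax (S ∪ T) y hsy
    have hkey : ∑ j ∈ T, (g (B S) j) ^ 2 =
        2 * M * (∑ i ∈ T, g (B S) i * (g (B S) i / M))
          - M ^ 2 * (∑ i ∈ T, (g (B S) i / M) ^ 2) := by
      rw [Finset.mul_sum, Finset.mul_sum, ← Finset.sum_sub_distrib]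
      apply Finset.sum_congr rfl
      intro i _
      field_simp
      ring
    rw [hkey]
    nlinarith [h2, hmax, hM]
  have hChi : 2 * m * (l (B (S ∪ T)) - l (B S)) ≤ ∑ j ∈ T, (g (B S) j) ^ 2 := by
    set x := B (S ∪ T) with hx
    have hsd : SuppIn (S ∪ T) (x - B S) :=
      suppIn_sub (hBsupp _) (fun i hi => hBsupp S i (fun h => hi (Finset.mem_union_left T h)))
    have h0x : norm0 x ≤ 2 * k := (norm0_le (hBsupp _)).trans hcardU
    have h0d : norm0 (B S - x) ≤ 2 * k := by
      rw [norm0_sub_comm]; exact (norm0_le hsd).trans hcardU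
    have h1 := (hl (B S) x h0BS h0x h0d).1
    rw [euc_inner_eq, euc_norm_sq] at h1
    have hpt : ∀ i : Fin n,
        2 * m * (g (B S) i * (x - B S) i) - m ^ 2 * ((x - B S) i) ^ 2
          ≤ (if i ∈ T then (g (B S) i) ^ 2 else 0) := by
      intro i
      by_cases hiT : i ∈ T
      · rw [if_pos hiT]
        nlinarith [sq_nonneg (g (B S) i - m * ((x - B S) i))]
      · rw [if_neg hiT]
        by_cases hiS : i ∈ S
        · rw [hzero i hiS]
          have hd2 : (0:ℝ) ≤ ((x - B S) i) ^ 2 := sq_nonneg _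
          nlinarith [hd2, sq_nonneg m]
        · rw [hsd i (by simp [hiS, hiT])]
          norm_num
    have hsum : ∑ i, (2 * m * (g (B S) i * (x - B S) i) - m ^ 2 * ((x - B S) i) ^ 2)
        ≤ ∑ j ∈ T, (g (B S) j) ^ 2 := by
      calc ∑ i, (2 * m * (g (B S) i * (x - B S) i) - m ^ 2 * ((x - B S) i) ^ 2)
          ≤ ∑ i : Fin n, (if i ∈ T then (g (B S) i) ^ 2 else 0) :=
            Finset.sum_le_sum (fun i _ => hpt i)
        _ = ∑ j ∈ T, (g (B S) j) ^ 2 := by rw [Finset.sum_ite_mem, Finset.univ_inter]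
    have hexp : ∑ i, (2 * m * (g (B S) i * (x - B S) i) - m ^ 2 * ((x - B S) i) ^ 2)
        = 2 * m * (∑ i, g (B S) i * (x - B S) i) - m ^ 2 * (∑ i, ((x - B S) i) ^ 2) := by
      rw [Finset.mul_sum, Finset.mul_sum, ← Finset.sum_sub_distrib]
    rw [hexp] at hsum
    nlinarith [h1, hm, hsum]
  -- combine
  have hfd : ∀ X : Finset (Fin n), fsel l B X - fsel l B S = l (B X) - l (B S) := by
    intro X; unfold fsel; ring
  have hsumlow : (∑ j ∈ T, (g (B S) j) ^ 2)
      ≤ 2 * M * ∑ j ∈ T, (l (B (insert j S)) - l (B S)) := by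
    rw [Finset.mul_sum]
    exact Finset.sum_le_sum (fun j hj => (hBj j hj).1)
  have hsumhigh : 2 * m * ∑ j ∈ T, (l (B (insert j S)) - l (B S))
      ≤ ∑ j ∈ T, (g (B S) j) ^ 2 := by
    rw [Finset.mul_sum]
    exact Finset.sum_le_sum (fun j hj => (hBj j hj).2)
  simp_rw [hfd]
  constructor
  · rw [ge_iff_le, div_mul_eq_mul_div, le_div_iff₀ hm]
    linarith [hsumhigh, hClo]
  · rw [ge_iff_le, div_mul_eq_mul_div, div_le_iff₀ hM]
    linarith [hsumlow, hChi]
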